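/- arXiv:math/0006208 — 2 statements merged into one kernel-verified Lean document; each statement's English description precedes it below -/
import Mathlib

section
/- Let n ≥ 4 be an integer, let P be a partition of {1,…,n} each of whose classes has at least two elements, and for every unordered partition 𝒯 = {T, T^c} of {1,…,n} with |T|, |T^c| ≥ 2 and 𝒯 > P, let e_𝒯 be a rational number with e_𝒯 ≥ −1. Then the element κ_n + Σ_{𝒯 > P} e_𝒯 · δ_T of V_n is an effective boundary class. (This is Lemma 4.4: the divisor κ + Σ_{𝒯 > P} e_𝒯 δ_𝒯 on \bar M_{0,n} is linearly equivalent to an effective sum of boundary divisors whenever each e_𝒯 ≥ −1.) -/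
open Finset

noncomputable section

/-- The free `ℚ`-vector space on the symbols `δ_T`, `T ⊆ {1,…,n}`. -/
abbrev FreeV (n : ℕ) := Finset (Fin n) →₀ ℚ

/-- The defining relations of the vector space `V_n`:
(i) `δ_T = δ_{Tᶜ}`;  (ii) `δ_T = 0` for `|T| ≤ 1`;
(iii) for distinct `i, j, k, l`,
`Σ_{i,j ∈ T, k,l ∉ T} δ_T = Σ_{i,k ∈ T, j,l ∉ T} δ_T`. -/
def relSet (n : ℕ) : Set (FreeV n) :=
  {x | (∃ T : Finset (Fin n), x = Finsupp.single T 1 - Finsupp.single Tᶜ 1) ∨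
       (∃ T : Finset (Fin n), T.card ≤ 1 ∧ x = Finsupp.single T 1) ∨
       (∃ i j k l : Fin n,
         (i ≠ j ∧ i ≠ k ∧ i ≠ l ∧ j ≠ k ∧ j ≠ l ∧ k ≠ l) ∧
         x = (∑ T ∈ univ.filter
                (fun T : Finset (Fin n) => i ∈ T ∧ j ∈ T ∧ k ∉ T ∧ l ∉ T),
                Finsupp.single T (1 : ℚ)) -
             ∑ T ∈ univ.filter
                (fun T : Finset (Fin n) => i ∈ T ∧ k ∈ T ∧ j ∉ T ∧ l ∉ T),
                Finsupp.single T (1 : ℚ))}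

/-- The submodule of relations. -/
def relSub (n : ℕ) : Submodule ℚ (FreeV n) := Submodule.span ℚ (relSet n)

/-- The `ℚ`-vector space `V_n` spanned by the symbols `δ_T`, `T ⊆ {1,…,n}`,
modulo the relations (i)–(iii); this is the `ℚ`-Picard group of `\bar M_{0,n}`. -/
abbrev V (n : ℕ) := FreeV n ⧸ relSub n

/-- The boundary class `δ_T ∈ V_n`. -/
def delta {n : ℕ} (T : Finset (Fin n)) : V n :=
  Submodule.Quotient.mk (Finsupp.single T 1)

/-- An element of `V_n` is an *effective boundary class* if it is a linear
combination of the classes `δ_T` with nonnegative rational coefficients. -/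
def IsEffectiveBoundary {n : ℕ} (x : V n) : Prop :=
  ∃ c : Finset (Fin n) → ℚ, (∀ T, 0 ≤ c T) ∧
    x = ∑ T : Finset (Fin n), c T • delta T

/-- The tautological class `κ` on `\bar M_{0,n}` expanded in boundary divisors:
`κ_n = Σ (|T|(n−|T|)/(n−1) − 1) δ_T`, the sum over unordered partitions
`{T, Tᶜ}` of `{1,…,n}` with `|T|, |Tᶜ| ≥ 2`, each counted once.  (Since the
coefficient is invariant under `T ↦ Tᶜ`, this equals half the sum over all
such ordered `T`.) -/
def kappa (n : ℕ) : V n :=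
  (1 / 2 : ℚ) • ∑ T ∈ univ.filter
      (fun T : Finset (Fin n) => 2 ≤ T.card ∧ 2 ≤ Tᶜ.card),
    ((((T.card : ℚ) * ((n : ℚ) - (T.card : ℚ))) / ((n : ℚ) - 1)) - 1) • delta T

/-! ### Auxiliary lemmas -/

lemma delta_compl {n : ℕ} (T : Finset (Fin n)) : delta Tᶜ = delta T := by
  have h : (Finsupp.single T 1 - Finsupp.single Tᶜ 1 : FreeV n) ∈ relSub n :=
    Submodule.subset_span (Or.inl ⟨T, rfl⟩)
  exact ((Submodule.Quotient.eq (relSub n)).2 h).symm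

lemma delta_small {n : ℕ} {T : Finset (Fin n)} (h : T.card ≤ 1) : delta T = 0 := by
  rw [delta, Submodule.Quotient.mk_eq_zero]
  exact Submodule.subset_span (Or.inr (Or.inl ⟨T, h, rfl⟩))

lemma delta_small' {n : ℕ} {T : Finset (Fin n)} (h : Tᶜ.card ≤ 1) : delta T = 0 := by
  rw [← delta_compl]; exact delta_small h

lemma delta_mkQ {n : ℕ} (T : Finset (Fin n)) :
    delta T = (relSub n).mkQ (Finsupp.single T 1) := rfl

def Psi {n : ℕ} (i a b : Fin n) : V n :=
  ∑ T ∈ univ.filter (fun T : Finset (Fin n) => i ∈ T ∧ a ∉ T ∧ b ∉ T), delta T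

lemma psi_exchange {n : ℕ} {i j k l : Fin n}
    (hij : i ≠ j) (hik : i ≠ k) (hil : i ≠ l) (hjk : j ≠ k) (hjl : j ≠ l) (hkl : k ≠ l) :
    Psi i k l = Psi i j l := by
  have hx : ((∑ T ∈ univ.filter
                (fun T : Finset (Fin n) => i ∈ T ∧ j ∈ T ∧ k ∉ T ∧ l ∉ T),
                Finsupp.single T (1 : ℚ)) -
             ∑ T ∈ univ.filter
                (fun T : Finset (Fin n) => i ∈ T ∧ k ∈ T ∧ j ∉ T ∧ l ∉ T),
                Finsupp.single T (1 : ℚ)) ∈ relSub n :=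
    Submodule.subset_span (Or.inr (Or.inr ⟨i, j, k, l, ⟨hij, hik, hil, hjk, hjl, hkl⟩, rfl⟩))
  have key : (∑ T ∈ univ.filter (fun T : Finset (Fin n) => i ∈ T ∧ k ∉ T ∧ l ∉ T),
        Finsupp.single T (1:ℚ)) -
      (∑ T ∈ univ.filter (fun T : Finset (Fin n) => i ∈ T ∧ j ∉ T ∧ l ∉ T),
        Finsupp.single T (1:ℚ)) =
      (∑ T ∈ univ.filter (fun T : Finset (Fin n) => i ∈ T ∧ j ∈ T ∧ k ∉ T ∧ l ∉ T),
        Finsupp.single T (1:ℚ)) -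
      (∑ T ∈ univ.filter (fun T : Finset (Fin n) => i ∈ T ∧ k ∈ T ∧ j ∉ T ∧ l ∉ T),
        Finsupp.single T (1:ℚ)) := by
    rw [Finset.sum_filter, Finset.sum_filter, Finset.sum_filter, Finset.sum_filter,
      ← Finset.sum_sub_distrib, ← Finset.sum_sub_distrib]
    apply Finset.sum_congr rfl
    intro T _
    by_cases hi : i ∈ T <;> by_cases hj : j ∈ T <;> by_cases hk : k ∈ T <;>
      by_cases hl : l ∈ T <;> simp [hi, hj, hk, hl]
  have hmk : Psi i k l - Psi i j l = Submodule.Quotient.mk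
      ((∑ T ∈ univ.filter (fun T : Finset (Fin n) => i ∈ T ∧ k ∉ T ∧ l ∉ T),
        Finsupp.single T (1:ℚ)) -
      (∑ T ∈ univ.filter (fun T : Finset (Fin n) => i ∈ T ∧ j ∉ T ∧ l ∉ T),
        Finsupp.single T (1:ℚ))) := by
    rw [Psi, Psi]
    simp only [delta_mkQ, ← map_sum, ← map_sub]
    rfl
  have hz : Psi i k l - Psi i j l = 0 := by
    rw [hmk, key, Submodule.Quotient.mk_eq_zero]
    exact hx
  exact sub_eq_zero.mp hz

lemma psi_symm {n : ℕ} (i a b : Fin n) : Psi i a b = Psi i b a := by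
  rw [Psi, Psi]
  apply Finset.sum_congr _ (fun _ _ => rfl)
  ext T
  simp only [mem_filter, mem_univ, true_and]
  tauto

lemma psi_fst {n : ℕ} {i a b c : Fin n}
    (hic : i ≠ c) (hia : i ≠ a) (hib : i ≠ b) (hca : c ≠ a) (hcb : c ≠ b) (hab : a ≠ b) :
    Psi i a b = Psi i c b :=
  psi_exchange hic hia hib hca hcb hab

lemma psi_snd {n : ℕ} {i a b d : Fin n}
    (hid : i ≠ d) (hib : i ≠ b) (hia : i ≠ a) (hdb : d ≠ b) (hda : d ≠ a) (hba : b ≠ a) :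
    Psi i a b = Psi i a d := by
  rw [psi_symm, psi_fst hid hib hia hdb hda hba, psi_symm]

lemma psi_eq {n : ℕ} {i a b c d : Fin n}
    (hia : a ≠ i) (hib : b ≠ i) (hab : a ≠ b)
    (hic : c ≠ i) (hid : d ≠ i) (hcd : c ≠ d) :
    Psi i a b = Psi i c d := by
  by_cases hca : c = a
  · subst hca
    by_cases hdb : d = b
    · subst hdb; rfl
    · exact psi_snd hid.symm hib.symm hic.symm (by tauto) hcd.symm (Ne.symm hab)
  · by_cases hcb : c = b
    · subst hcb
      by_cases hda : d = a
      · subst hda; exact psi_symm i d c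
      · have h1 : Psi i a c = Psi i a d :=
          psi_snd hid.symm hic.symm hia.symm hcd.symm (by tauto) (Ne.symm hab)
        have h2 : Psi i a d = Psi i c d :=
          psi_fst hic.symm hia.symm hid.symm (by tauto) hcd (by tauto)
        rw [h1, h2]
    · have h1 : Psi i a b = Psi i c b :=
        psi_fst hic.symm hia.symm hib.symm (by tauto) (by tauto) hab
      by_cases hdb : d = b
      · subst hdb; rw [h1]
      · have h2 : Psi i c b = Psi i c d :=
          psi_snd hid.symm hib.symm hic.symm (by tauto) hcd.symm (by tauto)
        rw [h1, h2]

lemma sum_indic {α : Type*} [Fintype α] (cond : α → Prop) [DecidablePred cond] (c : ℚ) :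
    ∑ p : α, (if cond p then c else 0) = ((univ.filter cond).card : ℚ) * c := by
  rw [← Finset.sum_filter, Finset.sum_const, nsmul_eq_mul]

lemma psi_sum_expand {n : ℕ} (w : Fin n × Fin n × Fin n → ℚ) :
    ∑ p : Fin n × Fin n × Fin n, w p • Psi p.1 p.2.1 p.2.2
      = ∑ T : Finset (Fin n),
          (∑ p : Fin n × Fin n × Fin n,
            if p.1 ∈ T ∧ p.2.1 ∉ T ∧ p.2.2 ∉ T then w p else 0) • delta T := by
  have h : ∀ p : Fin n × Fin n × Fin n, w p • Psi p.1 p.2.1 p.2.2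
      = ∑ T : Finset (Fin n),
          (if p.1 ∈ T ∧ p.2.1 ∉ T ∧ p.2.2 ∉ T then w p else 0) • delta T := by
    intro p
    rw [Psi, Finset.smul_sum, Finset.sum_filter]
    apply Finset.sum_congr rfl
    intro T _
    rw [ite_smul, zero_smul]
  rw [Finset.sum_congr rfl (fun p _ => h p), Finset.sum_comm]
  apply Finset.sum_congr rfl
  intro T _
  rw [Finset.sum_smul]

lemma psi_regroup {n : ℕ} (w : Fin n × Fin n × Fin n → ℚ)
    (hw : ∀ p : Fin n × Fin n × Fin n, w p ≠ 0 → p.2.1 ≠ p.1 ∧ p.2.2 ≠ p.1 ∧ p.2.1 ≠ p.2.2)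
    (r1 r2 : Fin n → Fin n) (h1 : ∀ i, r1 i ≠ i) (h2 : ∀ i, r2 i ≠ i) (h3 : ∀ i, r1 i ≠ r2 i) :
    ∑ p : Fin n × Fin n × Fin n, w p • Psi p.1 p.2.1 p.2.2
      = ∑ i : Fin n, (∑ q : Fin n × Fin n, w (i, q)) • Psi i (r1 i) (r2 i) := by
  rw [Fintype.sum_prod_type]
  apply Finset.sum_congr rfl
  intro i _
  rw [Finset.sum_smul]
  apply Finset.sum_congr rfl
  intro q _
  by_cases h : w (i, q) = 0
  · simp [h]
  · obtain ⟨ha, hb, hab⟩ := hw (i, q) h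
    rw [psi_eq ha hb hab (h1 i) (h2 i) (h3 i)]

lemma sum_delta_compl {n : ℕ} (f : Finset (Fin n) → ℚ) :
    ∑ T : Finset (Fin n), f T • delta T = ∑ T : Finset (Fin n), f Tᶜ • delta T := by
  have hb : Function.Bijective (fun T : Finset (Fin n) => Tᶜ) :=
    Function.Involutive.bijective (fun T => compl_compl T)
  rw [← Function.Bijective.sum_comp hb (fun T => f Tᶜ • delta T)]
  apply Finset.sum_congr rfl
  intro T _
  simp only [compl_compl, delta_compl]

lemma sum_delta_sym {n : ℕ} (f : Finset (Fin n) → ℚ) :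
    ∑ T : Finset (Fin n), f T • delta T
      = ∑ T : Finset (Fin n), ((f T + f Tᶜ) / 2) • delta T := by
  have h1 : ∀ T : Finset (Fin n), ((f T + f Tᶜ) / 2) • delta T
      = (1/2 * f T) • delta T + (1/2 * f Tᶜ) • delta T := by
    intro T
    rw [← add_smul]; congr 1; ring
  rw [Finset.sum_congr rfl (fun T _ => h1 T), Finset.sum_add_distrib]
  simp only [mul_smul, ← Finset.smul_sum]
  rw [← sum_delta_compl f, ← add_smul]
  norm_num

lemma sum_delta_congr {n : ℕ} (f g : Finset (Fin n) → ℚ)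
    (h : ∀ T : Finset (Fin n), 2 ≤ T.card → 2 ≤ Tᶜ.card → f T = g T) :
    ∑ T : Finset (Fin n), f T • delta T = ∑ T : Finset (Fin n), g T • delta T := by
  apply Finset.sum_congr rfl
  intro T _
  by_cases h1 : 2 ≤ T.card
  · by_cases h2 : 2 ≤ Tᶜ.card
    · rw [h T h1 h2]
    · rw [delta_small' (by omega), smul_zero, smul_zero]
  · rw [delta_small (by omega), smul_zero, smul_zero]

lemma filter_sum_delta {n : ℕ} (p : Finset (Fin n) → Prop) [DecidablePred p]
    (c : Finset (Fin n) → ℚ) :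
    ∑ T ∈ univ.filter p, c T • delta T
      = ∑ T : Finset (Fin n), (if p T then c T else 0) • delta T := by
  rw [Finset.sum_filter]
  apply Finset.sum_congr rfl
  intro T _
  rw [ite_smul, zero_smul]

section Weights
variable {n : ℕ}

def w1 (n : ℕ) : Fin n × Fin n × Fin n → ℚ := fun p =>
  if p.2.1 ≠ p.1 ∧ p.2.2 ≠ p.1 ∧ p.2.1 ≠ p.2.2 then 1/(((n:ℚ)-1)*((n:ℚ)-2)) else 0

def w2 (P : Finpartition (Finset.univ : Finset (Fin n))) (π : Fin n → Fin n) :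
    Fin n × Fin n × Fin n → ℚ := fun p =>
  (if P.part p.1 = univ then 1 else 3/4) * w1 n p +
  (if P.part p.1 ≠ univ ∧ p.2.1 ∉ P.part p.1 ∧ p.2.2 = π p.2.1
   then 1/(4*((n:ℚ) - ((P.part p.1).card : ℚ))) else 0)

lemma part_card_lt {P : Finpartition (Finset.univ : Finset (Fin n))} {i : Fin n}
    (h : P.part i ≠ univ) : (P.part i).card < n := by
  have := Finset.card_lt_card ((Finset.subset_univ (P.part i)).ssubset_of_ne h)
  simpa using this

lemma w1_nonneg (hn : 4 ≤ n) (p : Fin n × Fin n × Fin n) : 0 ≤ w1 n p := by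
  have hq : (4:ℚ) ≤ (n:ℚ) := by exact_mod_cast hn
  rw [w1]
  split_ifs
  · have h2 : (0:ℚ) < ((n:ℚ)-1)*((n:ℚ)-2) := by nlinarith
    positivity
  · exact le_refl 0

lemma c2_pos {P : Finpartition (Finset.univ : Finset (Fin n))} {i : Fin n}
    (h : P.part i ≠ univ) : 0 < 1/(4*((n:ℚ) - ((P.part i).card : ℚ))) := by
  have h1 := part_card_lt h
  have h2 : ((P.part i).card : ℚ) < (n : ℚ) := by exact_mod_cast h1
  have h3 : (0:ℚ) < 4*((n:ℚ) - ((P.part i).card : ℚ)) := by linarith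
  positivity

lemma w2_nonneg (hn : 4 ≤ n) (P : Finpartition (Finset.univ : Finset (Fin n)))
    (π : Fin n → Fin n) (p : Fin n × Fin n × Fin n) : 0 ≤ w2 P π p := by
  rw [w2]
  have h1 := w1_nonneg hn p
  apply add_nonneg
  · apply mul_nonneg _ h1
    split_ifs <;> norm_num
  · split_ifs with h
    · exact le_of_lt (c2_pos h.1)
    · exact le_refl 0

lemma w2_ge (hn : 4 ≤ n) (P : Finpartition (Finset.univ : Finset (Fin n)))
    (π : Fin n → Fin n) (p : Fin n × Fin n × Fin n) : 3/4 * w1 n p ≤ w2 P π p := by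
  rw [w2]
  have h1 := w1_nonneg hn p
  have h2 : 3/4 * w1 n p ≤ (if P.part p.1 = univ then (1:ℚ) else 3/4) * w1 n p := by
    apply mul_le_mul_of_nonneg_right _ h1
    split_ifs <;> norm_num
  have h3 : (0:ℚ) ≤ (if P.part p.1 ≠ univ ∧ p.2.1 ∉ P.part p.1 ∧ p.2.2 = π p.2.1
      then 1/(4*((n:ℚ) - ((P.part p.1).card : ℚ))) else 0) := by
    split_ifs with h
    · exact le_of_lt (c2_pos h.1)
    · exact le_refl 0
  linarith

end Weights

section Counts
variable {n : ℕ}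

lemma sum_indic' {α : Type*} [Fintype α] (cond : α → Prop) [DecidablePred cond] (c : ℚ) :
    ∑ p : α, (if cond p then c else 0) = ((univ.filter cond).card : ℚ) * c := by
  rw [← Finset.sum_filter, Finset.sum_const, nsmul_eq_mul]

lemma fiber1 (hn : 4 ≤ n) (i : Fin n) : ∑ q : Fin n × Fin n, w1 n (i, q) = 1 := by
  have h0 : ∑ q : Fin n × Fin n, w1 n (i, q)
      = ∑ q : Fin n × Fin n, (if q.1 ≠ i ∧ q.2 ≠ i ∧ q.1 ≠ q.2
          then 1/(((n:ℚ)-1)*((n:ℚ)-2)) else 0) := rfl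
  rw [h0, sum_indic']
  have hfil : (univ.filter (fun q : Fin n × Fin n => q.1 ≠ i ∧ q.2 ≠ i ∧ q.1 ≠ q.2))
      = (univ.erase i).offDiag := by
    ext ⟨a, b⟩
    simp [Finset.mem_offDiag]
  rw [hfil]
  have hq : (4:ℚ) ≤ (n:ℚ) := by exact_mod_cast hn
  have hcard : ((univ.erase i).offDiag.card : ℚ) = ((n:ℚ)-1)*((n:ℚ)-2) := by
    rw [Finset.offDiag_card, card_erase_of_mem (mem_univ i), card_univ, Fintype.card_fin]
    have hm : n - 1 ≤ (n-1)*(n-1) := Nat.le_mul_of_pos_left _ (by omega)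
    rw [Nat.cast_sub hm]
    push_cast [Nat.cast_sub (by omega : 1 ≤ n)]
    ring
  rw [hcard]
  have hne : ((n:ℚ)-1)*((n:ℚ)-2) ≠ 0 := by nlinarith
  rw [mul_one_div, div_self hne]

lemma fiber2 (hn : 4 ≤ n) (P : Finpartition (Finset.univ : Finset (Fin n)))
    (π : Fin n → Fin n) (i : Fin n) : ∑ q : Fin n × Fin n, w2 P π (i, q) = 1 := by
  have h0 : ∑ q : Fin n × Fin n, w2 P π (i, q)
      = ∑ q : Fin n × Fin n, ((if P.part i = univ then (1:ℚ) else 3/4) * w1 n (i, q)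
        + (if P.part i ≠ univ ∧ q.1 ∉ P.part i ∧ q.2 = π q.1
           then 1/(4*((n:ℚ) - ((P.part i).card : ℚ))) else 0)) := rfl
  rw [h0, Finset.sum_add_distrib, ← Finset.mul_sum, fiber1 hn i, mul_one]
  by_cases hu : P.part i = univ
  · simp [hu]
  · rw [if_neg hu]
    have h1 : ∑ q : Fin n × Fin n, (if P.part i ≠ univ ∧ q.1 ∉ P.part i ∧ q.2 = π q.1
        then 1/(4*((n:ℚ) - ((P.part i).card : ℚ))) else 0)
        = ∑ q : Fin n × Fin n, (if q.1 ∉ P.part i ∧ q.2 = π q.1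
        then 1/(4*((n:ℚ) - ((P.part i).card : ℚ))) else 0) := by
      apply Finset.sum_congr rfl
      intro q _
      apply if_congr _ rfl rfl
      tauto
    rw [h1, sum_indic']
    have hfil : (univ.filter (fun q : Fin n × Fin n => q.1 ∉ P.part i ∧ q.2 = π q.1)).card
        = (P.part i)ᶜ.card := by
      apply Finset.card_nbij' (fun q => q.1) (fun a => (a, π a))
      · intro q hq; simp only [Finset.mem_coe, mem_filter, mem_univ, true_and] at hq
        simp [Finset.mem_compl, hq.1]
      · intro a ha; simp only [Finset.mem_coe, Finset.mem_compl] at ha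
        simp [ha]
      · intro q hq; simp only [Finset.mem_coe, mem_filter, mem_univ, true_and] at hq
        exact Prod.ext rfl hq.2.symm
      · intro a _; simp
    rw [hfil]
    have hlt := part_card_lt hu
    have hcast : ((P.part i)ᶜ.card : ℚ) = (n:ℚ) - ((P.part i).card : ℚ) := by
      rw [Finset.card_compl, Fintype.card_fin]
      push_cast [Nat.cast_sub (le_of_lt hlt)]
      ring
    rw [hcast]
    have hne : (n:ℚ) - ((P.part i).card : ℚ) ≠ 0 := by
      have : ((P.part i).card : ℚ) < (n : ℚ) := by exact_mod_cast hlt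
      linarith
    field_simp
    ring

end Counts

section Cnt
variable {n : ℕ}

def cnt (n : ℕ) (w : Fin n × Fin n × Fin n → ℚ) : Finset (Fin n) → ℚ := fun T =>
  ∑ p : Fin n × Fin n × Fin n, if p.1 ∈ T ∧ p.2.1 ∉ T ∧ p.2.2 ∉ T then w p else 0

lemma cnt1_val (T : Finset (Fin n)) :
    cnt n (w1 n) T = (T.card : ℚ) * ((Tᶜ.offDiag.card : ℕ) : ℚ)
      * (1/(((n:ℚ)-1)*((n:ℚ)-2))) := by
  rw [cnt]
  have hterm : ∀ p : Fin n × Fin n × Fin n,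
      (if p.1 ∈ T ∧ p.2.1 ∉ T ∧ p.2.2 ∉ T then w1 n p else 0)
        = (if p.1 ∈ T ∧ p.2.1 ∉ T ∧ p.2.2 ∉ T ∧ p.2.1 ≠ p.2.2
           then 1/(((n:ℚ)-1)*((n:ℚ)-2)) else 0) := by
    intro p
    by_cases hA : p.1 ∈ T ∧ p.2.1 ∉ T ∧ p.2.2 ∉ T
    · obtain ⟨hi, ha, hb⟩ := hA
      have h1 : p.2.1 ≠ p.1 := fun h => ha (h ▸ hi)
      have h2 : p.2.2 ≠ p.1 := fun h => hb (h ▸ hi)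
      rw [if_pos ⟨hi, ha, hb⟩, w1]
      by_cases hab : p.2.1 = p.2.2
      · rw [if_neg (by tauto), if_neg (by tauto)]
      · rw [if_pos ⟨h1, h2, hab⟩, if_pos ⟨hi, ha, hb, hab⟩]
    · rw [if_neg hA, if_neg (by tauto)]
  rw [Finset.sum_congr rfl (fun p _ => hterm p), sum_indic']
  have hfil : (univ.filter (fun p : Fin n × Fin n × Fin n =>
      p.1 ∈ T ∧ p.2.1 ∉ T ∧ p.2.2 ∉ T ∧ p.2.1 ≠ p.2.2)) = T ×ˢ Tᶜ.offDiag := by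
    ext ⟨i, a, b⟩
    simp [Finset.mem_offDiag, Finset.mem_product]
  rw [hfil, Finset.card_product, Nat.cast_mul]

lemma cnt2_ge (hn : 4 ≤ n) (P : Finpartition (Finset.univ : Finset (Fin n)))
    (π : Fin n → Fin n) (T : Finset (Fin n)) :
    3/4 * cnt n (w1 n) T ≤ cnt n (w2 P π) T := by
  rw [cnt, cnt, Finset.mul_sum]
  apply Finset.sum_le_sum
  intro p _
  by_cases h : p.1 ∈ T ∧ p.2.1 ∉ T ∧ p.2.2 ∉ T
  · rw [if_pos h, if_pos h]
    exact w2_ge hn P π p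
  · rw [if_neg h, if_neg h, mul_zero]

lemma cnt2_ge' (hn : 4 ≤ n) (P : Finpartition (Finset.univ : Finset (Fin n)))
    (hPc : ∀ p ∈ P.parts, 2 ≤ p.card)
    (π : Fin n → Fin n) (hπmem : ∀ a, π a ∈ P.part a)
    (T : Finset (Fin n)) (h2 : 2 ≤ Tᶜ.card)
    (hE : ∀ p ∈ P.parts, p ⊆ T ∨ p ⊆ Tᶜ) :
    3/4 * cnt n (w1 n) T + (T.card : ℚ) * (Tᶜ.card : ℚ) * (1/(4*((n:ℚ)-2)))
      ≤ cnt n (w2 P π) T := by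
  have hq : (4:ℚ) ≤ (n:ℚ) := by exact_mod_cast hn
  -- facts about parts for elements of T
  have hpartT : ∀ i ∈ T, P.part i ⊆ T := by
    intro i hi
    rcases hE (P.part i) (P.part_mem.2 (mem_univ i)) with h | h
    · exact h
    · exact absurd (h (P.mem_part (mem_univ i))) (by simp [hi])
  have hpartC : ∀ a, a ∉ T → P.part a ⊆ Tᶜ := by
    intro a ha
    rcases hE (P.part a) (P.part_mem.2 (mem_univ a)) with h | h
    · exact absurd (h (P.mem_part (mem_univ a))) ha
    · exact h
  -- the extra indicator sum
  have key : ∀ p : Fin n × Fin n × Fin n,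
      (if p.1 ∈ T ∧ p.2.1 ∉ T ∧ p.2.2 = π p.2.1 then 1/(4*((n:ℚ)-2)) else 0)
      ≤ (if p.1 ∈ T ∧ p.2.1 ∉ T ∧ p.2.2 ∉ T then
          (if P.part p.1 ≠ univ ∧ p.2.1 ∉ P.part p.1 ∧ p.2.2 = π p.2.1
           then 1/(4*((n:ℚ) - ((P.part p.1).card : ℚ))) else 0) else 0) := by
    intro p
    by_cases hs : p.1 ∈ T ∧ p.2.1 ∉ T ∧ p.2.2 = π p.2.1
    · obtain ⟨hi, ha, hb⟩ := hs
      rw [if_pos ⟨hi, ha, hb⟩]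
      have hsubT := hpartT p.1 hi
      have hsubC := hpartC p.2.1 ha
      have hπb : p.2.2 ∉ T := by
        rw [hb]
        have := hsubC (hπmem p.2.1)
        simpa [Finset.mem_compl] using this
      have huniv : P.part p.1 ≠ univ := by
        intro h
        have : Tᶜ.card = 0 := by
          have hTu : T = univ := Finset.univ_subset_iff.mp (h ▸ hsubT)
          rw [hTu]; simp
        omega
      have hnotin : p.2.1 ∉ P.part p.1 := fun h => ha (hsubT h)
      rw [if_pos ⟨hi, ha, hπb⟩, if_pos ⟨huniv, hnotin, hb⟩]
      -- 1/(4(n-2)) ≤ 1/(4(n-card))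
      have hcardle : (P.part p.1).card ≤ T.card := Finset.card_le_card hsubT
      have h2c : 2 ≤ (P.part p.1).card := hPc _ (P.part_mem.2 (mem_univ p.1))
      have h2cq : (2:ℚ) ≤ ((P.part p.1).card : ℚ) := by exact_mod_cast h2c
      have hTcard : T.card + Tᶜ.card = n := by
        have := Finset.card_add_card_compl T
        simpa using this
      have hc2 : ((P.part p.1).card : ℚ) ≤ (n:ℚ) - 2 := by
        have : (P.part p.1).card ≤ n - 2 := by omega
        have h4 : ((P.part p.1).card : ℚ) ≤ ((n - 2 : ℕ) : ℚ) := by exact_mod_cast this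
        rw [Nat.cast_sub (by omega : 2 ≤ n)] at h4
        exact_mod_cast h4
      have hpos : (0:ℚ) < (n:ℚ) - ((P.part p.1).card : ℚ) := by linarith
      exact one_div_le_one_div_of_le (by linarith) (by linarith)
    · rw [if_neg hs]
      split_ifs with h1 h2
      · exact le_of_lt (c2_pos h2.1)
      · exact le_refl 0
      · exact le_refl 0
  -- sum of the lower-bound indicators
  have hsum : ∑ p : Fin n × Fin n × Fin n,
      (if p.1 ∈ T ∧ p.2.1 ∉ T ∧ p.2.2 = π p.2.1 then 1/(4*((n:ℚ)-2)) else 0)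
      = (T.card : ℚ) * (Tᶜ.card : ℚ) * (1/(4*((n:ℚ)-2))) := by
    rw [sum_indic']
    have hfil : (univ.filter (fun p : Fin n × Fin n × Fin n =>
        p.1 ∈ T ∧ p.2.1 ∉ T ∧ p.2.2 = π p.2.1))
        = T ×ˢ ((univ.filter (fun q : Fin n × Fin n => q.1 ∉ T ∧ q.2 = π q.1))) := by
      ext ⟨i, a, b⟩
      simp [Finset.mem_product]
    have hcard2 : (univ.filter (fun q : Fin n × Fin n => q.1 ∉ T ∧ q.2 = π q.1)).card
        = Tᶜ.card := by
      apply Finset.card_nbij' (fun q => q.1) (fun a => (a, π a))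
      · intro q hq; simp only [Finset.mem_coe, mem_filter, mem_univ, true_and] at hq
        simp [Finset.mem_compl, hq.1]
      · intro a ha; simp only [Finset.mem_coe, Finset.mem_compl] at ha
        simp [ha]
      · intro q hq; simp only [Finset.mem_coe, mem_filter, mem_univ, true_and] at hq
        exact Prod.ext rfl hq.2.symm
      · intro a _; simp
    rw [hfil, Finset.card_product, hcard2, Nat.cast_mul]
  -- assemble
  have hw2split : cnt n (w2 P π) T
      = (∑ p : Fin n × Fin n × Fin n,
          if p.1 ∈ T ∧ p.2.1 ∉ T ∧ p.2.2 ∉ T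
          then (if P.part p.1 = univ then (1:ℚ) else 3/4) * w1 n p else 0)
      + (∑ p : Fin n × Fin n × Fin n,
          if p.1 ∈ T ∧ p.2.1 ∉ T ∧ p.2.2 ∉ T then
          (if P.part p.1 ≠ univ ∧ p.2.1 ∉ P.part p.1 ∧ p.2.2 = π p.2.1
           then 1/(4*((n:ℚ) - ((P.part p.1).card : ℚ))) else 0) else 0) := by
    rw [cnt, ← Finset.sum_add_distrib]
    apply Finset.sum_congr rfl
    intro p _
    rw [w2]
    split_ifs <;> simp
  rw [hw2split]
  have hfirst : 3/4 * cnt n (w1 n) T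
      ≤ ∑ p : Fin n × Fin n × Fin n,
          (if p.1 ∈ T ∧ p.2.1 ∉ T ∧ p.2.2 ∉ T
          then (if P.part p.1 = univ then (1:ℚ) else 3/4) * w1 n p else 0) := by
    rw [cnt, Finset.mul_sum]
    apply Finset.sum_le_sum
    intro p _
    by_cases h : p.1 ∈ T ∧ p.2.1 ∉ T ∧ p.2.2 ∉ T
    · rw [if_pos h, if_pos h]
      apply mul_le_mul_of_nonneg_right _ (w1_nonneg hn p)
      split_ifs <;> norm_num
    · rw [if_neg h, if_neg h, mul_zero]
  have hsecond : (T.card:ℚ) * (Tᶜ.card:ℚ) * (1/(4*((n:ℚ)-2)))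
      ≤ ∑ p : Fin n × Fin n × Fin n,
          (if p.1 ∈ T ∧ p.2.1 ∉ T ∧ p.2.2 ∉ T then
          (if P.part p.1 ≠ univ ∧ p.2.1 ∉ P.part p.1 ∧ p.2.2 = π p.2.1
           then 1/(4*((n:ℚ) - ((P.part p.1).card : ℚ))) else 0) else 0) := by
    rw [← hsum]
    exact Finset.sum_le_sum (fun p _ => key p)
  linarith

end Cnt

section Final
variable {n : ℕ}

lemma symcnt1 (hn : 4 ≤ n) (T : Finset (Fin n)) :
    (cnt n (w1 n) T + cnt n (w1 n) Tᶜ)/2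
      = (T.card:ℚ) * ((n:ℚ) - (T.card:ℚ)) / (2*((n:ℚ)-1)) := by
  have hq : (4:ℚ) ≤ (n:ℚ) := by exact_mod_cast hn
  have hne1 : ((n:ℚ) - 1) ≠ 0 := by intro h; nlinarith
  have hne2 : ((n:ℚ) - 2) ≠ 0 := by intro h; nlinarith
  rw [cnt1_val, cnt1_val, compl_compl]
  have hssn : (T.card:ℚ) + (Tᶜ.card:ℚ) = (n:ℚ) := by
    have := Finset.card_add_card_compl T
    simp only [Fintype.card_fin] at this
    exact_mod_cast this
  have hoff : ∀ S : Finset (Fin n), ((S.offDiag.card : ℕ) : ℚ)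
      = (S.card:ℚ) * (S.card:ℚ) - (S.card:ℚ) := by
    intro S
    have hle : S.card ≤ S.card * S.card := by
      rcases Nat.eq_zero_or_pos S.card with h | h
      · simp [h]
      · exact Nat.le_mul_of_pos_left _ h
    rw [Finset.offDiag_card, Nat.cast_sub hle, Nat.cast_mul]
  have hs' : ((Tᶜ.card : ℕ):ℚ) = (n:ℚ) - (T.card:ℚ) := by linarith
  rw [hoff, hoff, hs']
  field_simp
  ring

end Final

section Bridge
variable {n : ℕ}

lemma cnt_delta (w : Fin n × Fin n × Fin n → ℚ) :
    ∑ p : Fin n × Fin n × Fin n, w p • Psi p.1 p.2.1 p.2.2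
      = ∑ T : Finset (Fin n), cnt n w T • delta T :=
  psi_sum_expand w

lemma w1_valid (p : Fin n × Fin n × Fin n) (h : w1 n p ≠ 0) :
    p.2.1 ≠ p.1 ∧ p.2.2 ≠ p.1 ∧ p.2.1 ≠ p.2.2 := by
  by_contra hc
  exact h (by rw [w1, if_neg hc])

end Bridge

/-- **Lemma 4.4 of Gibney–Keel–Morrison**: let `P` be a partition of `{1,…,n}`
each of whose classes has at least two elements, and for each unordered
partition `𝒯 = {T, Tᶜ}` with `|T|, |Tᶜ| ≥ 2` and `𝒯 > P`
(i.e. every class of `P` lies in `T` or in `Tᶜ`), let `e T` be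
a rational number with `e T ≥ −1` (well defined on unordered partitions:
`e T = e Tᶜ`).  Then `κ_n + Σ_{𝒯 > P} e_𝒯 δ_T` is an effective boundary class.
(The sum over unordered partitions counted once is again written as half the
sum over ordered `T`.) -/
theorem kappa_add_eff
    (n : ℕ) (hn : 4 ≤ n)
    (P : Finpartition (Finset.univ : Finset (Fin n)))
    (hP : ∀ p ∈ P.parts, 2 ≤ p.card)
    (e : Finset (Fin n) → ℚ)
    (hesymm : ∀ T : Finset (Fin n), 2 ≤ T.card → 2 ≤ Tᶜ.card →
      (∀ p ∈ P.parts, p ⊆ T ∨ p ⊆ Tᶜ) → e T = e Tᶜ)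
    (he : ∀ T : Finset (Fin n), 2 ≤ T.card → 2 ≤ Tᶜ.card →
      (∀ p ∈ P.parts, p ⊆ T ∨ p ⊆ Tᶜ) → -1 ≤ e T) :
    IsEffectiveBoundary (kappa n +
      (1 / 2 : ℚ) • ∑ T ∈ univ.filter
          (fun T : Finset (Fin n) =>
            2 ≤ T.card ∧ 2 ≤ Tᶜ.card ∧ ∀ p ∈ P.parts, p ⊆ T ∨ p ⊆ Tᶜ),
        e T • delta T) := by
  have hq : (4:ℚ) ≤ (n:ℚ) := by exact_mod_cast hn
  -- canonical pair of indices distinct from a given one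
  have hex : ∀ i : Fin n, ∃ ab : Fin n × Fin n, ab.1 ≠ i ∧ ab.2 ≠ i ∧ ab.1 ≠ ab.2 := by
    intro i
    have hcard : 1 < ((univ : Finset (Fin n)).erase i).card := by
      rw [card_erase_of_mem (mem_univ i), card_univ, Fintype.card_fin]; omega
    obtain ⟨a, ha, b, hb, hab⟩ := Finset.one_lt_card.mp hcard
    exact ⟨(a, b), (mem_erase.mp ha).1, (mem_erase.mp hb).1, hab⟩
  choose rr hr1 hr2 hr3 using hex
  -- partner function
  have hexπ : ∀ i : Fin n, ∃ j : Fin n, j ∈ P.part i ∧ j ≠ i := by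
    intro i
    have h2 : 2 ≤ (P.part i).card := hP _ (P.part_mem.2 (mem_univ i))
    obtain ⟨b, hb, hbi⟩ := Finset.exists_mem_ne (s := P.part i) (by omega) i
    exact ⟨b, hb, hbi⟩
  choose π hπmem hπne using hexπ
  have hπmem' : ∀ a : Fin n, π a ∈ P.part a := hπmem
  -- validity of the supports
  have hw2valid : ∀ p : Fin n × Fin n × Fin n, w2 P π p ≠ 0 →
      p.2.1 ≠ p.1 ∧ p.2.2 ≠ p.1 ∧ p.2.1 ≠ p.2.2 := by
    intro p hp
    by_contra hc
    apply hp
    have h1 : w1 n p = 0 := by rw [w1, if_neg hc]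
    rw [w2, h1, mul_zero, zero_add, if_neg]
    intro ⟨hu, hnotin, hb⟩
    apply hc
    have hmm : p.1 ∈ P.part p.1 := P.mem_part (mem_univ p.1)
    have ha1 : p.2.1 ≠ p.1 := fun h => hnotin (h ▸ hmm)
    have hb1 : p.2.2 ≠ p.1 := by
      intro h
      have hmem : p.1 ∈ P.part p.2.1 := by rw [← h, hb]; exact hπmem p.2.1
      have heq : P.part p.1 = P.part p.2.1 :=
        P.part_eq_of_mem (P.part_mem.2 (mem_univ p.2.1)) hmem
      exact hnotin (heq ▸ (P.mem_part (mem_univ p.2.1)))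
    have hab : p.2.1 ≠ p.2.2 := by
      intro h
      exact hπne p.2.1 (by rw [← hb, ← h])
    exact ⟨ha1, hb1, hab⟩
  -- the master identity
  have hcnt_eq : ∑ T : Finset (Fin n), cnt n (w1 n) T • delta T
      = ∑ T : Finset (Fin n), cnt n (w2 P π) T • delta T := by
    rw [← cnt_delta (w1 n), ← cnt_delta (w2 P π),
      psi_regroup (w1 n) w1_valid (fun i => (rr i).1) (fun i => (rr i).2) hr1 hr2 hr3,
      psi_regroup (w2 P π) hw2valid (fun i => (rr i).1) (fun i => (rr i).2) hr1 hr2 hr3]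
    apply Finset.sum_congr rfl
    intro i _
    rw [fiber1 hn i, fiber2 hn P π i]
  -- the effective coefficients
  refine ⟨fun T => if 2 ≤ T.card ∧ 2 ≤ Tᶜ.card
      then (cnt n (w2 P π) T + cnt n (w2 P π) Tᶜ)/2
        + (-1/2 + (1/2) * (if (∀ p ∈ P.parts, p ⊆ T ∨ p ⊆ Tᶜ) then e T else 0))
      else 0, ?_, ?_⟩
  · -- nonnegativity
    intro T
    dsimp only
    by_cases hK : 2 ≤ T.card ∧ 2 ≤ Tᶜ.card
    · rw [if_pos hK]
      obtain ⟨h1, h2⟩ := hK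
      have hs : (2:ℚ) ≤ (T.card:ℚ) := by exact_mod_cast h1
      have hs' : (2:ℚ) ≤ (Tᶜ.card:ℚ) := by exact_mod_cast h2
      have hssn : (T.card:ℚ) + (Tᶜ.card:ℚ) = (n:ℚ) := by
        have := Finset.card_add_card_compl T
        simp only [Fintype.card_fin] at this
        exact_mod_cast this
      have hsym1 := symcnt1 hn T
      have hX : (2:ℚ)/3 ≤ (T.card:ℚ) * ((n:ℚ) - (T.card:ℚ)) / (2*((n:ℚ)-1)) := by
        rw [le_div_iff₀ (by linarith)]
        nlinarith [mul_nonneg (by linarith : (0:ℚ) ≤ (T.card:ℚ) - 2)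
          (by linarith : (0:ℚ) ≤ (n:ℚ) - (T.card:ℚ) - 2)]
      by_cases hE : ∀ p ∈ P.parts, p ⊆ T ∨ p ⊆ Tᶜ
      · rw [if_pos hE]
        have heT := he T h1 h2 hE
        have hEc : ∀ p ∈ P.parts, p ⊆ Tᶜ ∨ p ⊆ Tᶜᶜ := by
          intro p hp
          rcases hE p hp with h | h
          · right; rw [compl_compl]; exact h
          · left; exact h
        have hgeT := cnt2_ge' hn P hP π hπmem' T h2 hE
        have hgeTc := cnt2_ge' hn P hP π hπmem' Tᶜ (by rw [compl_compl]; exact h1) hEc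
        rw [compl_compl] at hgeTc
        have hY : (1:ℚ)/2 ≤ (T.card:ℚ) * (Tᶜ.card:ℚ) * (1/(4*((n:ℚ)-2))) := by
          rw [show (T.card:ℚ) * (Tᶜ.card:ℚ) * (1/(4*((n:ℚ)-2)))
            = (T.card:ℚ) * (Tᶜ.card:ℚ) / (4*((n:ℚ)-2)) from by ring,
            le_div_iff₀ (by linarith)]
          nlinarith [mul_nonneg (by linarith : (0:ℚ) ≤ (T.card:ℚ) - 2)
            (by linarith : (0:ℚ) ≤ (Tᶜ.card:ℚ) - 2)]
        have hcomm : (Tᶜ.card:ℚ) * (T.card:ℚ) * (1/(4*((n:ℚ)-2)))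
            = (T.card:ℚ) * (Tᶜ.card:ℚ) * (1/(4*((n:ℚ)-2))) := by ring
        rw [hcomm] at hgeTc
        linarith
      · rw [if_neg hE]
        have hgeT := cnt2_ge hn P π T
        have hgeTc := cnt2_ge hn P π Tᶜ
        linarith
    · rw [if_neg hK]
  · -- the identity in V n
    rw [kappa, smul_sum, smul_sum]
    simp only [smul_smul]
    rw [filter_sum_delta, filter_sum_delta, ← Finset.sum_add_distrib]
    simp only [← add_smul]
    -- step A : replace the κ-coefficient by the symmetrised cnt1 plus remainder
    have stepA : ∑ T : Finset (Fin n),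
        ((if 2 ≤ T.card ∧ 2 ≤ Tᶜ.card
            then 1/2 * ((((T.card : ℚ) * ((n : ℚ) - (T.card : ℚ))) / ((n : ℚ) - 1)) - 1) else 0)
          + (if 2 ≤ T.card ∧ 2 ≤ Tᶜ.card ∧ ∀ p ∈ P.parts, p ⊆ T ∨ p ⊆ Tᶜ
            then 1/2 * e T else 0)) • delta T
        = ∑ T : Finset (Fin n),
        ((cnt n (w1 n) T + cnt n (w1 n) Tᶜ)/2
          + (if 2 ≤ T.card ∧ 2 ≤ Tᶜ.card
              then (-1/2 + (1/2) * (if (∀ p ∈ P.parts, p ⊆ T ∨ p ⊆ Tᶜ) then e T else 0))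
              else 0)) • delta T := by
      apply sum_delta_congr
      intro T h1 h2
      have hne1 : ((n:ℚ) - 1) ≠ 0 := by intro h; nlinarith
      have hK12 : 2 ≤ T.card ∧ 2 ≤ Tᶜ.card := ⟨h1, h2⟩
      rw [symcnt1 hn T]
      by_cases hE : ∀ p ∈ P.parts, p ⊆ T ∨ p ⊆ Tᶜ
      · have hKE : 2 ≤ T.card ∧ 2 ≤ Tᶜ.card ∧ ∀ p ∈ P.parts, p ⊆ T ∨ p ⊆ Tᶜ :=
          ⟨h1, h2, hE⟩
        simp only [if_pos hKE, if_pos hE, if_pos hK12]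
        field_simp
        ring
      · have hKE : ¬(2 ≤ T.card ∧ 2 ≤ Tᶜ.card ∧ ∀ p ∈ P.parts, p ⊆ T ∨ p ⊆ Tᶜ) :=
          fun hc => hE hc.2.2
        simp only [if_neg hKE, if_neg hE, if_pos hK12]
        field_simp
        ring
    rw [stepA]
    -- split, exchange cnt1 for cnt2, recombine
    have split1 : ∀ (f : Finset (Fin n) → ℚ) (g : Finset (Fin n) → ℚ),
        ∑ T : Finset (Fin n), (f T + g T) • delta T
          = (∑ T : Finset (Fin n), f T • delta T) + ∑ T : Finset (Fin n), g T • delta T := by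
      intro f g
      simp only [add_smul]
      rw [Finset.sum_add_distrib]
    rw [split1, ← sum_delta_sym (cnt n (w1 n)), hcnt_eq, sum_delta_sym (cnt n (w2 P π)),
      ← split1]
    apply sum_delta_congr
    intro T h1 h2
    have hK12 : 2 ≤ T.card ∧ 2 ≤ Tᶜ.card := ⟨h1, h2⟩
    simp only [if_pos hK12]

end
end

section
/- Let n ≥ 4 be an integer. The element κ_n − δ̄_n of V_n is NOT an effective boundary class. (This is the assertion of the Remark following Lemma 4.4: κ − δ is not an effective sum of boundary divisors on \bar M_{0,n}, since as a symmetric expression the coefficient of B_2 is negative and there are no symmetric relations among boundary classes.) -/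
open Finset

noncomputable section

/-- The total boundary class `δ = Σ δ_T`, the sum over unordered partitions
`{T, Tᶜ}` of `{1,…,n}` with `|T|, |Tᶜ| ≥ 2`, each counted once (written as
half the sum over all such ordered `T`). -/
def deltaTotal (n : ℕ) : V n :=
  (1 / 2 : ℚ) • ∑ T ∈ univ.filter
      (fun T : Finset (Fin n) => 2 ≤ T.card ∧ 2 ≤ Tᶜ.card),
    delta T

/-! ### Auxiliary development: a linear functional separating `κ − δ` from
the effective cone. -/

/-- The test function: `1` on subsets of size `2` or `n − 2`, else `0`. -/
def testF (n : ℕ) (T : Finset (Fin n)) : ℚ :=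
  if T.card = 2 ∨ T.card + 2 = n then 1 else 0

/-- The induced linear functional on the free vector space. -/
def testPhi (n : ℕ) : FreeV n →ₗ[ℚ] ℚ := Finsupp.linearCombination ℚ (testF n)

lemma testPhi_single (n : ℕ) (T : Finset (Fin n)) :
    testPhi n (Finsupp.single T 1) = testF n T := by
  simp [testPhi]

lemma testF_nonneg (n : ℕ) (T : Finset (Fin n)) : 0 ≤ testF n T := by
  unfold testF; split <;> norm_num

lemma testF_compl (n : ℕ) (hn : 4 ≤ n) (T : Finset (Fin n)) :
    testF n Tᶜ = testF n T := by
  have h1 : Tᶜ.card = n - T.card := by rw [card_compl, Fintype.card_fin]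
  have h2 : T.card ≤ n := by simpa using card_le_card (subset_univ T)
  unfold testF
  rw [h1]
  congr 1
  simp only [eq_iff_iff]; omega

lemma testF_small (n : ℕ) (hn : 4 ≤ n) (T : Finset (Fin n)) (h : T.card ≤ 1) :
    testF n T = 0 := by
  unfold testF; rw [if_neg]; omega

lemma sum_swap_rel (n : ℕ) (i j k l : Fin n)
    (hij : i ≠ j) (hik : i ≠ k) (hil : i ≠ l) (hjk : j ≠ k) (hjl : j ≠ l) (hkl : k ≠ l) :
    ∑ T ∈ univ.filter (fun T : Finset (Fin n) => i ∈ T ∧ j ∈ T ∧ k ∉ T ∧ l ∉ T), testF n T =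
    ∑ T ∈ univ.filter (fun T : Finset (Fin n) => i ∈ T ∧ k ∈ T ∧ j ∉ T ∧ l ∉ T), testF n T := by
  have hji := hij.symm; have hki := hik.symm; have hli := hil.symm
  have hkj := hjk.symm; have hlj := hjl.symm; have hlk := hkl.symm
  apply Finset.sum_nbij' (fun T => insert k (T.erase j)) (fun T => insert j (T.erase k))
  · intro T hT
    simp only [mem_filter, mem_univ, true_and, mem_insert, mem_erase] at hT ⊢
    tauto
  · intro T hT
    simp only [mem_filter, mem_univ, true_and, mem_insert, mem_erase] at hT ⊢
    tauto
  · intro T hT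
    simp only [mem_filter, mem_univ, true_and] at hT
    obtain ⟨hi, hj, hk, hl⟩ := hT
    rw [erase_insert (fun h => hk (Finset.mem_of_mem_erase h)), insert_erase hj]
  · intro T hT
    simp only [mem_filter, mem_univ, true_and] at hT
    obtain ⟨hi, hk, hj, hl⟩ := hT
    rw [erase_insert (fun h => hj (Finset.mem_of_mem_erase h)), insert_erase hk]
  · intro T hT
    simp only [mem_filter, mem_univ, true_and] at hT
    obtain ⟨hi, hj, hk, hl⟩ := hT
    have hcard : (insert k (T.erase j)).card = T.card := by
      rw [card_insert_of_notMem (fun h => hk (Finset.mem_of_mem_erase h)),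
        card_erase_of_mem hj]
      have : 1 ≤ T.card := card_pos.2 ⟨j, hj⟩
      omega
    unfold testF; rw [hcard]

lemma relSub_le_ker (n : ℕ) (hn : 4 ≤ n) :
    relSub n ≤ LinearMap.ker (testPhi n) := by
  rw [relSub, Submodule.span_le]
  rintro x (⟨T, rfl⟩ | ⟨T, hT, rfl⟩ | ⟨i, j, k, l, ⟨hij, hik, hil, hjk, hjl, hkl⟩, rfl⟩)
  · simp [LinearMap.mem_ker, map_sub, testPhi_single, testF_compl n hn]
  · simp [LinearMap.mem_ker, testPhi_single, testF_small n hn T hT]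
  · simp only [SetLike.mem_coe, LinearMap.mem_ker, map_sub, map_sum, testPhi_single]
    rw [sum_swap_rel n i j k l hij hik hil hjk hjl hkl, sub_self]

/-- The induced functional on `V n`. -/
def testPhiBar (n : ℕ) (hn : 4 ≤ n) : V n →ₗ[ℚ] ℚ :=
  Submodule.liftQ (relSub n) (testPhi n) (relSub_le_ker n hn)

lemma testPhiBar_delta (n : ℕ) (hn : 4 ≤ n) (T : Finset (Fin n)) :
    testPhiBar n hn (delta T) = testF n T := by
  simp [testPhiBar, delta, testPhi_single]

lemma coeff_neg (n : ℕ) (hn : 4 ≤ n) (a : ℚ) (ha : a = 2 ∨ a + 2 = n) :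
    a * ((n : ℚ) - a) / ((n : ℚ) - 1) - 2 < 0 := by
  have hm : (4 : ℚ) ≤ (n : ℚ) := by exact_mod_cast hn
  have hpos : (0 : ℚ) < (n : ℚ) - 1 := by linarith
  rw [sub_neg, div_lt_iff₀ hpos]
  rcases ha with rfl | ha
  · linarith
  · have : a = (n : ℚ) - 2 := by linarith
    subst this
    nlinarith

/-- **The Remark following Lemma 4.4 of Gibney–Keel–Morrison**: `κ − δ` is
*not* an effective sum of boundary divisors on `\bar M_{0,n}` (`n ≥ 4`), since
as a symmetric expression the coefficient of `B_2` is negative and there are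
no symmetric relations among boundary classes. -/

theorem kappa_sub_delta_not_effective (n : ℕ) (hn : 4 ≤ n) :
    ¬ IsEffectiveBoundary (kappa n - deltaTotal n) := by
  rintro ⟨c, hc, hx⟩
  set Φ := testPhiBar n hn with hΦ
  -- value on the effective side is nonnegative
  have hnonneg : 0 ≤ Φ (kappa n - deltaTotal n) := by
    rw [hx, map_sum]
    apply Finset.sum_nonneg
    intro T _
    rw [map_smul, smul_eq_mul, testPhiBar_delta]
    exact mul_nonneg (hc T) (testF_nonneg n T)
  -- but the value is negative
  have hval : Φ (kappa n - deltaTotal n) =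
      (1 / 2 : ℚ) * ∑ T ∈ univ.filter
        (fun T : Finset (Fin n) => 2 ≤ T.card ∧ 2 ≤ Tᶜ.card),
        (((T.card : ℚ) * ((n : ℚ) - (T.card : ℚ)) / ((n : ℚ) - 1)) - 2) * testF n T := by
    rw [map_sub]
    unfold kappa deltaTotal
    rw [map_smul, map_smul, map_sum, map_sum, smul_eq_mul, smul_eq_mul, ← mul_sub,
      ← Finset.sum_sub_distrib]
    congr 1
    apply Finset.sum_congr rfl
    intro T _
    rw [map_smul, smul_eq_mul, testPhiBar_delta]
    ring
  have hneg : Φ (kappa n - deltaTotal n) < 0 := by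
    rw [hval]
    have hsum : ∑ T ∈ univ.filter
        (fun T : Finset (Fin n) => 2 ≤ T.card ∧ 2 ≤ Tᶜ.card),
        (((T.card : ℚ) * ((n : ℚ) - (T.card : ℚ)) / ((n : ℚ) - 1)) - 2) * testF n T < 0 := by
    -- witness: a 2-element set
      have h0n : (0 : ℕ) < n := by omega
      have h1n : (1 : ℕ) < n := by omega
      have h01 : (⟨0, h0n⟩ : Fin n) ≠ ⟨1, h1n⟩ := by
        simp [Fin.ext_iff]
      set T₀ : Finset (Fin n) := {⟨0, h0n⟩, ⟨1, h1n⟩} with hT₀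
      have hT₀card : T₀.card = 2 := by
        rw [hT₀, card_insert_of_notMem (by simp [h01]), card_singleton]
      have hT₀mem : T₀ ∈ univ.filter
          (fun T : Finset (Fin n) => 2 ≤ T.card ∧ 2 ≤ Tᶜ.card) := by
        simp only [mem_filter, mem_univ, true_and]
        refine ⟨le_of_eq hT₀card.symm, ?_⟩
        rw [card_compl, Fintype.card_fin, hT₀card]
        omega
      have := Finset.sum_lt_sum (f := fun T : Finset (Fin n) =>
          (((T.card : ℚ) * ((n : ℚ) - (T.card : ℚ)) / ((n : ℚ) - 1)) - 2) * testF n T)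
        (g := fun _ => (0 : ℚ)) (s := univ.filter
          (fun T : Finset (Fin n) => 2 ≤ T.card ∧ 2 ≤ Tᶜ.card))
        (by
          intro T _
          unfold testF
          split
          · rename_i h
            have hcoef := coeff_neg n hn (T.card : ℚ) (by
              rcases h with h | h
              · left; exact_mod_cast h
              · right; exact_mod_cast h)
            nlinarith
          · simp)
        ⟨T₀, hT₀mem, by
          have hf : testF n T₀ = 1 := by unfold testF; rw [if_pos (Or.inl hT₀card)]
          rw [hf, mul_one]
          exact coeff_neg n hn (T₀.card : ℚ) (by left; exact_mod_cast hT₀card)⟩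
      simpa using this
    linarith
  linarith

end
end
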